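/- Performance Difference Lemma: in a finite discounted MDP, for any two stationary policies π and π' and any start state s₀ ∈ S, V^π(s₀) − V^{π'}(s₀) = (1/(1−γ)) Σ_{s∈S} d^π_{s₀}(s) Σ_{a∈A} π(a|s) A^{π'}(s,a), where A^{π'}(s,a) = Q^{π'}(s,a) − V^{π'}(s) is the advantage of π'. -/

import Mathlib

/-- The Bellman operator of a stationary policy `π` in a finite discounted MDP. -/
def Tpol {S A : Type*} [Fintype S] [Fintype A]
    (P : S → A → S → ℝ) (r : S → A → ℝ) (γ : ℝ) (π : S → A → ℝ)
    (V : S → ℝ) : S → ℝ :=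
  fun s => ∑ a, π s a * (r s a + γ * ∑ s', P s a s' * V s')

/-- State distribution after `t` steps of policy `π` started from `s₀`:
`μ_0` is the point mass at `s₀` and `μ_{t+1}(s') = Σ_{s,a} μ_t(s) π(a|s) P(s'|s,a)`. -/
def muSeq {S A : Type*} [Fintype S] [Fintype A] [DecidableEq S]
    (P : S → A → S → ℝ) (π : S → A → ℝ) (s₀ : S) : ℕ → S → ℝ
  | 0 => fun s => if s = s₀ then 1 else 0
  | t + 1 => fun s' => ∑ s, ∑ a, muSeq P π s₀ t s * π s a * P s a s'

/-- The discounted occupancy measure `d^π_{s₀}(s) = (1−γ) Σ_{t≥0} γ^t μ^π_t(s)`. -/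
noncomputable def occ {S A : Type*} [Fintype S] [Fintype A] [DecidableEq S]
    (P : S → A → S → ℝ) (π : S → A → ℝ) (γ : ℝ) (s₀ : S) : S → ℝ :=
  fun s => (1 - γ) * ∑' t : ℕ, γ ^ t * muSeq P π s₀ t s

/-- Performance Difference Lemma:
`V^π(s₀) − V^{π'}(s₀) = (1/(1−γ)) Σ_s d^π_{s₀}(s) Σ_a π(a|s) A^{π'}(s,a)`. -/
theorem stmt9 {S A : Type*} [Fintype S] [Fintype A] [Nonempty S] [Nonempty A]
    [DecidableEq S]
    (P : S → A → S → ℝ) (hP0 : ∀ s a s', 0 ≤ P s a s')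
    (hP1 : ∀ s a, ∑ s', P s a s' = 1)
    (r : S → A → ℝ) (γ : ℝ) (hγ0 : 0 ≤ γ) (hγ1 : γ < 1)
    (π : S → A → ℝ) (hπ0 : ∀ s a, 0 ≤ π s a) (hπ1 : ∀ s, ∑ a, π s a = 1)
    (π' : S → A → ℝ) (hπ'0 : ∀ s a, 0 ≤ π' s a) (hπ'1 : ∀ s, ∑ a, π' s a = 1)
    (Vpi : S → ℝ) (hVpi : Tpol P r γ π Vpi = Vpi)
    (Vpi' : S → ℝ) (hVpi' : Tpol P r γ π' Vpi' = Vpi')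
    (s₀ : S) :
    Vpi s₀ - Vpi' s₀
      = (1 / (1 - γ)) * ∑ s, occ P π γ s₀ s *
          ∑ a, π s a * ((r s a + γ * ∑ t, P s a t * Vpi' t) - Vpi' s) := by
  set μ : ℕ → S → ℝ := muSeq P π s₀ with hμdef
  set g : S → ℝ := fun s => ∑ a, π s a * ((r s a + γ * ∑ t, P s a t * Vpi' t) - Vpi' s)
    with hgdef
  have hγne : (1 : ℝ) - γ ≠ 0 := by linarith
  -- nonnegativity and mass of μ
  have hμ0 : ∀ t s, 0 ≤ μ t s := by
    intro t
    induction t with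
    | zero =>
      intro s; simp only [hμdef, muSeq]; split <;> norm_num
    | succ t ih =>
      intro s'
      refine Finset.sum_nonneg fun s _ => Finset.sum_nonneg fun a _ => ?_
      exact mul_nonneg (mul_nonneg (ih s) (hπ0 s a)) (hP0 s a s')
  have hμ1 : ∀ t, ∑ s, μ t s = 1 := by
    intro t
    induction t with
    | zero => simp [hμdef, muSeq]
    | succ t ih =>
      have : ∑ s', μ (t + 1) s' = ∑ s, ∑ a, μ t s * π s a * (∑ s', P s a s') := by
        show ∑ s', ∑ s, ∑ a, μ t s * π s a * P s a s' = _
        rw [Finset.sum_comm]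
        refine Finset.sum_congr rfl fun s _ => ?_
        rw [Finset.sum_comm]
        exact Finset.sum_congr rfl fun a _ => (Finset.mul_sum _ _ _).symm
      rw [this]
      calc ∑ s, ∑ a, μ t s * π s a * (∑ s', P s a s')
          = ∑ s, μ t s * ∑ a, π s a := by
            refine Finset.sum_congr rfl fun s _ => ?_
            rw [Finset.mul_sum]
            exact Finset.sum_congr rfl fun a _ => by rw [hP1 s a, mul_one]
        _ = 1 := by simp only [hπ1, mul_one]; exact ih
  have hμle1 : ∀ t s, μ t s ≤ 1 := by
    intro t s
    calc μ t s ≤ ∑ s', μ t s' :=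
          Finset.single_le_sum (fun s' _ => hμ0 t s') (Finset.mem_univ s)
      _ = 1 := hμ1 t
  -- key transport identity
  have hT : ∀ (W : S → ℝ) (t : ℕ),
      ∑ s, μ t s * (∑ a, π s a * (r s a + γ * ∑ s', P s a s' * W s'))
        = (∑ s, μ t s * ∑ a, π s a * r s a) + γ * ∑ s', μ (t + 1) s' * W s' := by
    intro W t
    have hnext : ∀ s', μ (t + 1) s' = ∑ s, ∑ a, μ t s * π s a * P s a s' := fun s' => rfl
    have hR2 : γ * ∑ s', μ (t + 1) s' * W s'
        = ∑ s, ∑ a, ∑ s', μ t s * (π s a * (γ * (P s a s' * W s'))) := by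
      simp only [hnext, Finset.sum_mul, Finset.mul_sum]
      rw [Finset.sum_comm]
      refine Finset.sum_congr rfl fun s _ => ?_
      rw [Finset.sum_comm]
      exact Finset.sum_congr rfl fun a _ => Finset.sum_congr rfl fun s' _ => by ring
    have hR1 : ∑ s, μ t s * ∑ a, π s a * r s a = ∑ s, ∑ a, μ t s * (π s a * r s a) := by
      simp only [Finset.mul_sum, mul_assoc]
    rw [hR1, hR2, ← Finset.sum_add_distrib]
    refine Finset.sum_congr rfl fun s _ => ?_
    rw [Finset.mul_sum, ← Finset.sum_add_distrib]
    refine Finset.sum_congr rfl fun a _ => ?_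
    have e : ∑ s', μ t s * (π s a * (γ * (P s a s' * W s')))
        = μ t s * (π s a * (γ * ∑ s', P s a s' * W s')) := by
      rw [Finset.mul_sum, Finset.mul_sum, Finset.mul_sum]
    rw [e, ← mul_add, ← mul_add]
  -- fixed point of Vpi under π
  have hVfix : ∀ s, ∑ a, π s a * (r s a + γ * ∑ s', P s a s' * Vpi s') = Vpi s :=
    fun s => congrFun hVpi s
  have hRbar : ∀ t, ∑ s, μ t s * ∑ a, π s a * r s a
      = ∑ s, μ t s * Vpi s - γ * ∑ s', μ (t + 1) s' * Vpi s' := by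
    intro t
    have h := hT Vpi t
    simp only [hVfix] at h
    linarith
  -- g as Bellman difference
  have hgform : ∀ s, g s
      = (∑ a, π s a * (r s a + γ * ∑ s', P s a s' * Vpi' s')) - Vpi' s := by
    intro s
    simp only [hgdef, mul_sub, Finset.sum_sub_distrib, ← Finset.sum_mul, hπ1 s, one_mul]
  have hgsum : ∀ t, ∑ s, μ t s * g s
      = (∑ s, μ t s * (Vpi s - Vpi' s)) - γ * ∑ s, μ (t + 1) s * (Vpi s - Vpi' s) := by
    intro t
    have h := hT Vpi' t
    have hR := hRbar t
    have e1 : ∑ s, μ t s * g s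
        = (∑ s, μ t s * (∑ a, π s a * (r s a + γ * ∑ s', P s a s' * Vpi' s')))
          - ∑ s, μ t s * Vpi' s := by
      simp only [hgform, mul_sub, Finset.sum_sub_distrib]
    have e2 : ∀ (τ : ℕ), ∑ s, μ τ s * (Vpi s - Vpi' s)
        = ∑ s, μ τ s * Vpi s - ∑ s, μ τ s * Vpi' s := by
      intro τ; simp only [mul_sub, Finset.sum_sub_distrib]
    rw [e1, h, hR, e2, e2]
    ring
  -- telescoping function
  set F : ℕ → ℝ := fun t => γ ^ t * ∑ s, μ t s * (Vpi s - Vpi' s) with hFdef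
  have htel : ∀ t, γ ^ t * ∑ s, μ t s * g s = F t - F (t + 1) := by
    intro t
    rw [hgsum t]
    simp only [hFdef, pow_succ]
    ring
  -- bounds
  set C : ℝ := ∑ s, |Vpi s - Vpi' s| with hCdef
  set D : ℝ := ∑ s, |g s| with hDdef
  have habs : ∀ (t : ℕ) (h : S → ℝ), |∑ s, μ t s * h s| ≤ ∑ s, |h s| := by
    intro t h
    calc |∑ s, μ t s * h s| ≤ ∑ s, |μ t s * h s| := Finset.abs_sum_le_sum_abs _ _
      _ ≤ ∑ s, |h s| := by
        refine Finset.sum_le_sum fun s _ => ?_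
        rw [abs_mul, abs_of_nonneg (hμ0 t s)]
        nlinarith [abs_nonneg (h s), hμle1 t s, hμ0 t s]
  have hFbound : ∀ t, ‖F t‖ ≤ C * γ ^ t := by
    intro t
    rw [Real.norm_eq_abs, hFdef]
    simp only
    rw [abs_mul, abs_of_nonneg (pow_nonneg hγ0 t)]
    calc γ ^ t * |∑ s, μ t s * (Vpi s - Vpi' s)| ≤ γ ^ t * C :=
          mul_le_mul_of_nonneg_left (habs t _) (pow_nonneg hγ0 t)
      _ = C * γ ^ t := mul_comm _ _
  have hγabs : |γ| < 1 := by rw [abs_of_nonneg hγ0]; exact hγ1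
  have hFlim : Filter.Tendsto F Filter.atTop (nhds 0) := by
    refine squeeze_zero_norm hFbound ?_
    have := (tendsto_pow_atTop_nhds_zero_of_abs_lt_one hγabs).const_mul C
    simpa using this
  -- summability of the main series
  set f : ℕ → ℝ := fun t => γ ^ t * ∑ s, μ t s * g s with hfdef
  have hfb : ∀ t, ‖f t‖ ≤ D * γ ^ t := by
    intro t
    rw [Real.norm_eq_abs, hfdef]
    simp only
    rw [abs_mul, abs_of_nonneg (pow_nonneg hγ0 t)]
    calc γ ^ t * |∑ s, μ t s * g s| ≤ γ ^ t * D :=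
          mul_le_mul_of_nonneg_left (habs t _) (pow_nonneg hγ0 t)
      _ = D * γ ^ t := mul_comm _ _
  have hgeo : Summable fun t : ℕ => D * γ ^ t :=
    (summable_geometric_of_lt_one hγ0 hγ1).mul_left D
  have hfsummable : Summable f := Summable.of_norm_bounded hgeo hfb
  -- the series sums to Vpi s₀ - Vpi' s₀
  have hF0 : F 0 = Vpi s₀ - Vpi' s₀ := by
    simp only [hFdef, pow_zero, one_mul, hμdef, muSeq]
    simp [ite_mul]
  have hhasSum : HasSum f (Vpi s₀ - Vpi' s₀) := by
    rw [hfsummable.hasSum_iff_tendsto_nat]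
    have hps : ∀ n, ∑ i ∈ Finset.range n, f i = F 0 - F n := by
      intro n
      calc ∑ i ∈ Finset.range n, f i = ∑ i ∈ Finset.range n, (F i - F (i + 1)) :=
            Finset.sum_congr rfl fun i _ => htel i
        _ = F 0 - F n := Finset.sum_range_sub' F n
    simp only [hps]
    rw [← hF0]
    have := (tendsto_const_nhds (x := F 0) (f := Filter.atTop (α := ℕ))).sub hFlim
    simpa using this
  -- per-state summability
  have hssum : ∀ s, Summable fun t : ℕ => γ ^ t * μ t s * g s := by
    intro s
    refine Summable.of_norm_bounded (g := fun t => |g s| * γ ^ t)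
      ((summable_geometric_of_lt_one hγ0 hγ1).mul_left _) fun t => ?_
    rw [Real.norm_eq_abs, abs_mul, abs_mul, abs_of_nonneg (pow_nonneg hγ0 t),
      abs_of_nonneg (hμ0 t s)]
    calc γ ^ t * μ t s * |g s| = (γ ^ t * |g s|) * μ t s := by ring
      _ ≤ (γ ^ t * |g s|) * 1 :=
          mul_le_mul_of_nonneg_left (hμle1 t s)
            (mul_nonneg (pow_nonneg hγ0 t) (abs_nonneg _))
      _ = |g s| * γ ^ t := by ring
  -- now compute the RHS
  have hRHS : ∑ s, occ P π γ s₀ s * g s = (1 - γ) * (Vpi s₀ - Vpi' s₀) := by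
    have e1 : ∀ s, occ P π γ s₀ s * g s = (1 - γ) * ∑' t, γ ^ t * μ t s * g s := by
      intro s
      have : occ P π γ s₀ s = (1 - γ) * ∑' t, γ ^ t * μ t s := rfl
      rw [this, mul_assoc]
      congr 1
      rw [← tsum_mul_right]
    simp only [e1]
    rw [← Finset.mul_sum]
    congr 1
    rw [← Summable.tsum_finsetSum (fun s _ => hssum s)]
    have e2 : ∀ t : ℕ, ∑ s, γ ^ t * μ t s * g s = f t := by
      intro t
      simp only [hfdef, Finset.mul_sum]
      exact Finset.sum_congr rfl fun s _ => by ring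
    calc (∑' t, ∑ s, γ ^ t * μ t s * g s) = ∑' t, f t := by
          exact tsum_congr e2
      _ = Vpi s₀ - Vpi' s₀ := hhasSum.tsum_eq
  show Vpi s₀ - Vpi' s₀ = (1 / (1 - γ)) * ∑ s, occ P π γ s₀ s * g s
  rw [hRHS]
  field_simp
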